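/- If H is a path or a three-legged spider (three internally disjoint paths meeting at a common endpoint), then every graph G containing H as a minor also contains H as a subgraph. -/

import Mathlib

/-- `H` is a minor of `G`, via disjoint nonempty connected branch sets. -/
def SimpleGraph.IsMinorOf {W V : Type*} (H : SimpleGraph W) (G : SimpleGraph V) : Prop :=
  ∃ S : W → Set V, (∀ w, (S w).Nonempty) ∧
    (Pairwise fun w₁ w₂ => Disjoint (S w₁) (S w₂)) ∧
    (∀ w, (G.induce (S w)).Connected) ∧
    (∀ ⦃w₁ w₂⦄, H.Adj w₁ w₂ → ∃ u ∈ S w₁, ∃ v ∈ S w₂, G.Adj u v)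

/-- `G` contains a copy of `H` as a subgraph: an injective map preserving adjacency. -/
def ContainsCopy {W V : Type*} (H : SimpleGraph W) (G : SimpleGraph V) : Prop :=
  ∃ f : W → V, Function.Injective f ∧ ∀ ⦃a b : W⦄, H.Adj a b → G.Adj (f a) (f b)

open SimpleGraph Walk

section Aux
variable {V : Type*} {G : SimpleGraph V} [DecidableEq V]

lemma getVert_eq_support_getElem {u v : V} (p : G.Walk u v) {i : ℕ} (hi : i ≤ p.length) :
    p.getVert i = p.support[i]'(by rw [Walk.length_support]; omega) := by
  induction p generalizing i with
  | nil => obtain rfl := Nat.le_zero.mp hi; simp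
  | cons h q ih =>
    cases i with
    | zero => simp
    | succ i =>
      simp only [Walk.support_cons, Walk.getVert_cons_succ, List.getElem_cons_succ]
      exact ih (by simpa using hi)

lemma getVert_injOn_of_isPath {u v : V} {p : G.Walk u v} (hp : p.IsPath) {i j : ℕ}
    (hi : i ≤ p.length) (hj : j ≤ p.length) (h : p.getVert i = p.getVert j) : i = j := by
  rw [_root_.getVert_eq_support_getElem _ hi, _root_.getVert_eq_support_getElem _ hj] at h
  exact (List.Nodup.getElem_inj_iff hp.support_nodup).mp h

lemma getVert_mem_support {u v : V} (p : G.Walk u v) {i : ℕ} (hi : i ≤ p.length) :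
    p.getVert i ∈ p.support :=
  Walk.mem_support_iff_exists_getVert.mpr ⟨i, rfl, hi⟩

/-- an edge of a walk joins consecutive vertices -/
lemma exists_getVert_of_mem_edges {u v a b : V} {p : G.Walk u v}
    (h : s(a, b) ∈ p.edges) : ∃ i < p.length,
      (p.getVert i = a ∧ p.getVert (i + 1) = b) ∨ (p.getVert i = b ∧ p.getVert (i + 1) = a) := by
  induction p with
  | nil => simp at h
  | @cons x y _ hadj q ih =>
    rw [Walk.edges_cons, List.mem_cons] at h
    rcases h with h | h
    · refine ⟨0, by simp, ?_⟩
      rw [Sym2.eq_iff] at h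
      rcases h with ⟨rfl, rfl⟩ | ⟨rfl, rfl⟩
      · exact Or.inl ⟨by simp, by simp [Walk.getVert_cons]⟩
      · exact Or.inr ⟨by simp, by simp [Walk.getVert_cons]⟩
    · obtain ⟨i, hi, hor⟩ := ih h
      exact ⟨i + 1, by simp [Nat.succ_lt_succ_iff, hi], by
        simpa only [Walk.getVert_cons_succ] using hor⟩

/-- path between two points of a connected induced subgraph, staying inside the set -/
lemma exists_path_in_set {s : Set V} (hc : (G.induce s).Connected)
    {a b : V} (ha : a ∈ s) (hb : b ∈ s) :
    ∃ p : G.Walk a b, p.IsPath ∧ ∀ v ∈ p.support, v ∈ s := by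
  obtain ⟨q⟩ := hc.preconnected ⟨a, ha⟩ ⟨b, hb⟩
  let q' : G.Walk a b := q.map (SimpleGraph.Embedding.induce s).toHom
  refine ⟨q'.toPath, (q'.toPath).isPath, fun v hv => ?_⟩
  have := Walk.support_toPath_subset q' hv
  rw [show q'.support = _ from Walk.support_map (p := q) (f := (SimpleGraph.Embedding.induce s).toHom), List.mem_map] at this
  obtain ⟨⟨w, hw⟩, _, rfl⟩ := this
  exact hw

/-- first vertex of a walk lying in a given set, as a prefix walk -/
lemma exists_prefix_until (t : Set V) {a b : V} (p : G.Walk a b) (hb : b ∈ t) :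
    ∃ (x : V) (q : G.Walk a x), x ∈ t ∧
      (∀ v ∈ q.support, v ∈ p.support) ∧ (∀ v ∈ q.support, v ∈ t → v = x) ∧
      (p.IsPath → q.IsPath) := by
  induction p with
  | @nil u =>
    exact ⟨u, Walk.nil, hb, by simp, by simp, fun _ => Walk.IsPath.nil⟩
  | @cons u x' w hadj q ih =>
    by_cases hu : u ∈ t
    · exact ⟨u, Walk.nil, hu, by simp, by simp, fun _ => Walk.IsPath.nil⟩
    · obtain ⟨y, r, hy, hsub, hfirst, hpath⟩ := ih hb
      refine ⟨y, Walk.cons hadj r, hy, ?_, ?_, ?_⟩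
      · intro v hv
        rw [Walk.support_cons, List.mem_cons] at hv
        rcases hv with rfl | hv
        · simp
        · exact List.mem_cons_of_mem _ (hsub v hv)
      · intro v hv hvt
        rw [Walk.support_cons, List.mem_cons] at hv
        rcases hv with rfl | hv
        · exact absurd hvt hu
        · exact hfirst v hv hvt
      · intro hp
        rw [Walk.cons_isPath_iff] at hp ⊢
        exact ⟨hpath hp.1, fun hmem => hp.2 (hsub u hmem)⟩

end Aux

section Aux2
set_option linter.unusedSectionVars false

/-- dependent triple over `Fin 3` -/
def finTriple {α : Fin 3 → Sort*} (a0 : α 0) (a1 : α 1) (a2 : α 2) : ∀ i, α i :=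
  fun i => match i with
  | ⟨0, _⟩ => a0
  | ⟨1, _⟩ => a1
  | ⟨2, _⟩ => a2

variable {V : Type*} {G : SimpleGraph V} [DecidableEq V]

lemma isPath_append {a b c : V} {p : G.Walk a b} {q : G.Walk b c}
    (hp : p.IsPath) (hq : q.IsPath) (hmeet : ∀ v ∈ p.support, v ∈ q.support → v = b) :
    (p.append q).IsPath := by
  rw [Walk.isPath_def, Walk.support_append, List.nodup_append']
  refine ⟨hp.support_nodup, ?_, ?_⟩
  · have := hq.support_nodup
    rw [q.support_eq_cons] at this
    exact this.of_cons
  · intro v hv hv'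
    have hb : v = b := hmeet v hv (List.mem_of_mem_tail hv')
    subst hb
    have := hq.support_nodup
    rw [q.support_eq_cons] at this
    rw [q.support_eq_cons] at hv'
    exact (List.nodup_cons.mp this).1 (by simpa using hv')

lemma takeUntil_dropUntil_meet {a b x : V} {p : G.Walk a b} (hp : p.IsPath)
    (h : x ∈ p.support) :
    ∀ v, v ∈ (p.takeUntil x h).support → v ∈ (p.dropUntil x h).support → v = x := by
  intro v hv hv'
  have hnd : ((p.takeUntil x h).append (p.dropUntil x h)).IsPath := by
    rwa [p.take_spec h]
  rw [Walk.isPath_def, Walk.support_append, List.nodup_append'] at hnd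
  rw [(p.dropUntil x h).support_eq_cons, List.mem_cons] at hv'
  rcases hv' with rfl | hv'
  · rfl
  · exact absurd hv' (hnd.2.2 hv)

/-- tripod: three paths in a connected set from a common vertex to three given
vertices, pairwise meeting only at the common vertex -/
lemma tripod {s : Set V} (hc : (G.induce s).Connected) (a : Fin 3 → V) (ha : ∀ i, a i ∈ s) :
    ∃ (x : V), x ∈ s ∧ ∃ (P : ∀ i : Fin 3, G.Walk x (a i)),
      (∀ i, (P i).IsPath) ∧ (∀ i, ∀ v ∈ (P i).support, v ∈ s) ∧
      (∀ i j, i ≠ j → ∀ v, v ∈ (P i).support → v ∈ (P j).support → v = x) := by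
  obtain ⟨p12, hp12, hp12s⟩ := exists_path_in_set hc (ha 0) (ha 1)
  obtain ⟨p3, hp3, hp3s⟩ := exists_path_in_set hc (ha 2) (ha 0)
  obtain ⟨x, q, hx, hqsub, hqfirst, hqpath'⟩ :=
    exists_prefix_until {v | v ∈ p12.support} p3 (p12.start_mem_support)
  have hqpath := hqpath' hp3
  have hxs : x ∈ s := hp12s x hx
  set P0 : G.Walk x (a 0) := (p12.takeUntil x hx).reverse with hP0
  set P1 : G.Walk x (a 1) := p12.dropUntil x hx with hP1
  set P2 : G.Walk x (a 2) := q.reverse with hP2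
  have hsup0 : ∀ v ∈ P0.support, v ∈ (p12.takeUntil x hx).support := by
    intro v hv; rwa [Walk.support_reverse, List.mem_reverse] at hv
  have hsup2 : ∀ v ∈ P2.support, v ∈ q.support := by
    intro v hv; rwa [Walk.support_reverse, List.mem_reverse] at hv
  have hmeet01 : ∀ v, v ∈ P0.support → v ∈ P1.support → v = x := fun v hv hv' =>
    takeUntil_dropUntil_meet hp12 hx v (hsup0 v hv) hv'
  have hq12 : ∀ v ∈ q.support, v ∈ p12.support → v = x := fun v hv hv' => hqfirst v hv hv'
  refine ⟨x, hxs, finTriple P0 P1 P2, ?_, ?_, ?_⟩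
  · intro i
    fin_cases i
    · exact ((hp12.takeUntil hx).reverse)
    · exact hp12.dropUntil hx
    · exact hqpath.reverse
  · intro i
    fin_cases i
    · exact fun v hv => hp12s v (p12.support_takeUntil_subset hx (hsup0 v hv))
    · exact fun v hv => hp12s v (p12.support_dropUntil_subset hx hv)
    · exact fun v hv => hp3s v (hqsub v (hsup2 v hv))
  · have h02 : ∀ v, v ∈ P0.support → v ∈ P2.support → v = x := fun v hv hv' =>
      hq12 v (hsup2 v hv') (p12.support_takeUntil_subset hx (hsup0 v hv))
    have h12 : ∀ v, v ∈ P1.support → v ∈ P2.support → v = x := fun v hv hv' =>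
      hq12 v (hsup2 v hv') (p12.support_dropUntil_subset hx hv)
    intro i j hij v
    fin_cases i <;> fin_cases j <;> simp only [finTriple] <;>
      first
        | exact absurd rfl hij
        | exact fun h1 h2 => hmeet01 v h1 h2
        | exact fun h1 h2 => hmeet01 v h2 h1
        | exact fun h1 h2 => h02 v h1 h2
        | exact fun h1 h2 => h02 v h2 h1
        | exact fun h1 h2 => h12 v h1 h2
        | exact fun h1 h2 => h12 v h2 h1

end Aux2

section Aux3
set_option linter.unusedSectionVars false
variable {V : Type*} {G : SimpleGraph V} [DecidableEq V]

/-- build a long path through a chain of branch sets -/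
lemma chain_path (S : ℕ → Set V) (n : ℕ)
    (hdisj : ∀ i j, i ≤ n → j ≤ n → i ≠ j → Disjoint (S i) (S j))
    (hconn : ∀ i, i ≤ n → (G.induce (S i)).Connected)
    (hadj : ∀ i, i < n → ∃ u ∈ S i, ∃ v ∈ S (i + 1), G.Adj u v)
    {a : V} (ha : a ∈ S 0) :
    ∃ (b : V) (p : G.Walk a b), b ∈ S n ∧ p.IsPath ∧ n ≤ p.length ∧
      (∀ v ∈ p.support, ∃ i ≤ n, v ∈ S i) ∧
      (∀ v ∈ p.support, v ∈ S n → v = b) := by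
  induction n with
  | zero =>
    refine ⟨a, Walk.nil, ha, Walk.IsPath.nil, le_refl _, fun v hv => ?_, by simp⟩
    simp only [Walk.support_nil, List.mem_singleton] at hv
    subst hv
    exact ⟨0, le_refl _, ha⟩
  | succ n ih =>
    obtain ⟨b, p, hb, hpath, hlen, hsupp, hlast⟩ :=
      ih (fun i j hi hj => hdisj i j (by omega) (by omega))
        (fun i hi => hconn i (by omega)) (fun i hi => hadj i (by omega))
    obtain ⟨u, hu, w, hw, huw⟩ := hadj n (by omega)
    obtain ⟨r, hr, hrs⟩ := exists_path_in_set (hconn n (by omega)) hb hu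
    have hpr : (p.append r).IsPath := by
      refine isPath_append hpath hr fun v hv hv' => hlast v hv (hrs v hv')
    have hwnot : w ∉ (p.append r).support := by
      intro hmem
      rw [Walk.mem_support_append_iff] at hmem
      have : ∃ i ≤ n, w ∈ S i := by
        rcases hmem with hmem | hmem
        · exact hsupp w hmem
        · exact ⟨n, le_refl _, hrs w hmem⟩
      obtain ⟨i, hi, hwi⟩ := this
      exact Set.disjoint_left.mp (hdisj i (n+1) (by omega) (by omega) (by omega)) hwi hw
    refine ⟨w, (p.append r).append (Walk.cons huw Walk.nil), hw, ?_, ?_, ?_, ?_⟩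
    · refine isPath_append hpr (by simp [Walk.cons_isPath_iff, huw.ne]) ?_
      intro v hv hv'
      simp only [Walk.support_cons, Walk.support_nil, List.mem_cons, List.mem_singleton,
        List.not_mem_nil, or_false] at hv'
      rcases hv' with rfl | rfl
      · rfl
      · exact absurd hv hwnot
    · simp only [Walk.length_append, Walk.length_cons, Walk.length_nil]
      omega
    · intro v hv
      rw [Walk.mem_support_append_iff] at hv
      rcases hv with hv | hv
      · rw [Walk.mem_support_append_iff] at hv
        rcases hv with hv | hv
        · obtain ⟨i, hi, h⟩ := hsupp v hv
          exact ⟨i, by omega, h⟩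
        · exact ⟨n, by omega, hrs v hv⟩
      · simp only [Walk.support_cons, Walk.support_nil, List.mem_cons, List.mem_singleton,
          List.not_mem_nil, or_false] at hv
        rcases hv with rfl | rfl
        · exact ⟨n, by omega, hu⟩
        · exact ⟨n + 1, le_refl _, hw⟩
    · intro v hv hvS
      rw [Walk.mem_support_append_iff] at hv
      rcases hv with hv | hv
      · exfalso
        have : ∃ i ≤ n, v ∈ S i := by
          rw [Walk.mem_support_append_iff] at hv
          rcases hv with hv | hv
          · exact hsupp v hv
          · exact ⟨n, le_refl _, hrs v hv⟩
        obtain ⟨i, hi, h⟩ := this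
        exact Set.disjoint_left.mp (hdisj i (n+1) (by omega) (by omega) (by omega)) h hvS
      · simp only [Walk.support_cons, Walk.support_nil, List.mem_cons, List.mem_singleton,
          List.not_mem_nil, or_false] at hv
        rcases hv with rfl | rfl
        · exact absurd hvS (Set.disjoint_left.mp
            (hdisj n (n+1) (by omega) (by omega) (by omega)) hu)
        · rfl

end Aux3

section PathCase
set_option linter.unusedSectionVars false
variable {V : Type*} {G : SimpleGraph V} [DecidableEq V]

lemma containsCopy_of_pathGraph {W : Type*} {H : SimpleGraph W} {n : ℕ}
    (e : H ≃g SimpleGraph.pathGraph n) (hminor : H.IsMinorOf G) : ContainsCopy H G := by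
  cases n with
  | zero =>
    have : IsEmpty W := e.toEquiv.isEmpty
    exact ⟨fun w => isEmptyElim w, fun a => isEmptyElim a, fun a => isEmptyElim a⟩
  | succ n =>
    obtain ⟨S, hne, hdisj, hconn, hedge⟩ := hminor
    set T : ℕ → Set V := fun j => S (e.symm ⟨min j n, by omega⟩) with hT
    have hdisj' : ∀ i j, i ≤ n → j ≤ n → i ≠ j → Disjoint (T i) (T j) := by
      intro i j hi hj hij
      apply hdisj
      intro h
      apply hij
      have := e.symm.injective h
      simpa [Fin.ext_iff, Nat.min_eq_left hi, Nat.min_eq_left hj] using this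
    have hconn' : ∀ i, i ≤ n → (G.induce (T i)).Connected := fun i _ => hconn _
    have hadj' : ∀ i, i < n → ∃ u ∈ T i, ∃ v ∈ T (i + 1), G.Adj u v := by
      intro i hi
      have hAdj : H.Adj (e.symm ⟨min i n, by omega⟩) (e.symm ⟨min (i+1) n, by omega⟩) := by
        apply e.symm.map_adj_iff.mpr
        rw [SimpleGraph.pathGraph_adj]
        left
        simp only []
        omega
      exact hedge hAdj
    obtain ⟨a, ha⟩ := hne (e.symm ⟨0, by omega⟩)
    have ha' : a ∈ T 0 := by simpa [hT] using ha
    obtain ⟨b, p, hb, hpath, hlen, hsupp, hlast⟩ := chain_path T n hdisj' hconn' hadj' ha'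
    refine ⟨fun w => p.getVert (e w).val, ?_, ?_⟩
    · intro w₁ w₂ h
      have h1 : ((e w₁) : Fin (n+1)).val ≤ p.length := le_trans (by omega) hlen
      have h2 : ((e w₂) : Fin (n+1)).val ≤ p.length := le_trans (by omega) hlen
      have := getVert_injOn_of_isPath hpath h1 h2 h
      exact e.injective (Fin.ext this)
    · intro x y hxy
      have hadj2 : (SimpleGraph.pathGraph (n+1)).Adj (e x) (e y) := e.map_adj_iff.mpr hxy
      rw [SimpleGraph.pathGraph_adj] at hadj2
      have hx : ((e x) : Fin (n+1)).val ≤ n := by omega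
      have hy : ((e y) : Fin (n+1)).val ≤ n := by omega
      rcases hadj2 with h | h
      · have hlt : ((e x) : Fin (n+1)).val < p.length := by omega
        have := p.adj_getVert_succ hlt
        rwa [h] at this
      · have hlt : ((e y) : Fin (n+1)).val < p.length := by omega
        have := p.adj_getVert_succ hlt
        rw [h] at this
        exact this.symm

end PathCase

section SpiderH
set_option linter.unusedSectionVars false
variable {W : Type*} [DecidableEq W] {H : SimpleGraph W}

lemma one_le_length_of_ne {u v : W} (p : H.Walk u v) (h : u ≠ v) : 1 ≤ p.length := by
  by_contra hlen
  have := p.getVert_of_length_le (show p.length ≤ 0 by omega)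
  rw [Walk.getVert_zero] at this
  exact h this

lemma getVert_one_of_prefix {u v x : W} (p : H.Walk u v) (h : x ∈ p.support) (hx : u ≠ x) :
    (p.takeUntil x h).getVert 1 = p.getVert 1 := by
  have h1 : 1 ≤ (p.takeUntil x h).length := one_le_length_of_ne _ hx
  conv_rhs => rw [← p.take_spec h]
  rw [Walk.getVert_append]
  split_ifs with hlt
  · rfl
  · have hl : (p.takeUntil x h).length = 1 := by omega
    rw [hl]
    simp only [Nat.sub_self, Walk.getVert_zero]
    rw [← hl, Walk.getVert_length]

lemma length_eq_zero_of_isPath_eq {u v : W} (p : H.Walk u v) (hp : p.IsPath) (h : u = v) :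
    p.length = 0 := by
  subst h
  rw [(Walk.isPath_iff_eq_nil).mp hp]
  rfl

lemma getVert_takeUntil_eq {u v x : W} (p : H.Walk u v) (h : x ∈ p.support) {j : ℕ}
    (hj : j ≤ (p.takeUntil x h).length) : p.getVert j = (p.takeUntil x h).getVert j := by
  have hspec := p.take_spec h
  conv_lhs => rw [← hspec]
  rw [Walk.getVert_append]
  split_ifs with hlt
  · rfl
  · have hj' : j = (p.takeUntil x h).length := by omega
    subst hj'
    simp only [Nat.sub_self, Walk.getVert_zero, Walk.getVert_length]

lemma getVert_dropUntil_eq {u v x : W} (p : H.Walk u v) (h : x ∈ p.support) (j : ℕ) :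
    p.getVert ((p.takeUntil x h).length + j) = (p.dropUntil x h).getVert j := by
  have hspec := p.take_spec h
  obtain ⟨L, hL⟩ : ∃ L, (p.takeUntil x h).length = L := ⟨_, rfl⟩
  rw [hL]
  conv_lhs => rw [← hspec]
  rw [Walk.getVert_append, if_neg (by omega)]
  congr 1
  omega

lemma spider_decomp [Fintype W] [DecidableRel H.Adj]
    (hac : H.IsAcyclic) (hconn : H.Connected) {c : W}
    (hdeg : H.degree c = 3) (hmax : ∀ v, v ≠ c → H.degree v ≤ 2) :
    ∃ (t : Fin 3 → W) (Q : ∀ i, H.Walk c (t i)),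
      (∀ i, (Q i).IsPath) ∧ (∀ i, t i ≠ c) ∧
      (∀ i j, i ≠ j → ∀ v, v ∈ (Q i).support → v ∈ (Q j).support → v = c) ∧
      (∀ v, ∃ i, v ∈ (Q i).support) ∧
      (∀ a b, H.Adj a b → ∃ i, s(a, b) ∈ (Q i).edges) := by
  classical
  -- the unique path from c to v
  have hP0 : ∀ v : W, ∃ p : H.Walk c v, p.IsPath := by
    intro v
    obtain ⟨q⟩ := hconn.preconnected c v
    exact ⟨q.toPath, q.toPath.isPath⟩
  choose P hP using hP0
  have hUniq : ∀ (v : W) (q : H.Walk c v), q.IsPath → q = P v := by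
    intro v q hq
    have := hac.path_unique ⟨q, hq⟩ ⟨P v, hP v⟩
    exact congrArg Subtype.val this
  set dir : W → W := fun v => (P v).getVert 1 with hdir_def
  have hPlen : ∀ v, v ≠ c → 1 ≤ (P v).length := fun v hv =>
    one_le_length_of_ne _ (Ne.symm hv)
  have hdirAdj : ∀ v, v ≠ c → H.Adj c (dir v) := by
    intro v hv
    have := (P v).adj_getVert_succ (by have := hPlen v hv; omega : 0 < (P v).length)
    rwa [Walk.getVert_zero] at this
  -- the three neighbors of c
  rw [SimpleGraph.degree, Finset.card_eq_three] at hdeg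
  obtain ⟨n1, n2, n3, h12, h13, h23, hnb⟩ := hdeg
  set nb : Fin 3 → W := finTriple n1 n2 n3 with hnb_def
  have hnbAdj : ∀ i, H.Adj c (nb i) := by
    intro i
    have h1 : n1 ∈ H.neighborFinset c := by rw [hnb]; simp
    have h2 : n2 ∈ H.neighborFinset c := by rw [hnb]; simp
    have h3 : n3 ∈ H.neighborFinset c := by rw [hnb]; simp
    rw [SimpleGraph.mem_neighborFinset] at h1 h2 h3
    fin_cases i <;> simpa [hnb_def, finTriple]
  have hnbInj : ∀ i j, nb i = nb j → i = j := by
    intro i j h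
    fin_cases i <;> fin_cases j <;>
      first
        | rfl
        | (exfalso
           simp only [hnb_def, finTriple] at h
           first
             | exact h12 h | exact h13 h | exact h23 h
             | exact h12 h.symm | exact h13 h.symm | exact h23 h.symm)
  have hnbMem : ∀ u, H.Adj c u → ∃ i, u = nb i := by
    intro u hu
    have : u ∈ H.neighborFinset c := (SimpleGraph.mem_neighborFinset _ _ _).mpr hu
    rw [hnb] at this
    simp only [Finset.mem_insert, Finset.mem_singleton] at this
    rcases this with rfl | rfl | rfl
    · exact ⟨0, rfl⟩
    · exact ⟨1, rfl⟩
    · exact ⟨2, rfl⟩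
  have hdir_eq : ∀ v, v ≠ c → ∃ i, dir v = nb i := fun v hv => hnbMem _ (hdirAdj v hv)
  -- prefix facts
  have hprefix : ∀ (v w : W) (h : w ∈ (P v).support), (P w) = (P v).takeUntil w h := by
    intro v w h
    exact (hUniq w _ ((hP v).takeUntil h)).symm
  have hdir_pref : ∀ v w, w ∈ (P v).support → w ≠ c → dir w = dir v := by
    intro v w h hwc
    rw [hdir_def]
    simp only
    rw [hprefix v w h, getVert_one_of_prefix _ _ (Ne.symm hwc)]
  -- dir of a neighbor is itself
  have hdir_nb : ∀ i, dir (nb i) = nb i := by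
    intro i
    have hpath : (Walk.cons (hnbAdj i) Walk.nil : H.Walk c (nb i)).IsPath := by
      simp [Walk.cons_isPath_iff, (hnbAdj i).ne]
    have := hUniq _ _ hpath
    rw [hdir_def]
    simp only
    rw [← this]
    simp [Walk.getVert_cons]
  -- choose the far ends
  have hFex : ∀ i : Fin 3, ∃ v, (v ≠ c ∧ dir v = nb i) ∧
      ∀ u, (u ≠ c ∧ dir u = nb i) → (P u).length ≤ (P v).length := by
    intro i
    set F : Finset W := Finset.univ.filter (fun v => v ≠ c ∧ dir v = nb i) with hF
    have hFne : F.Nonempty := ⟨nb i, by simp [hF, (hnbAdj i).ne', hdir_nb i]⟩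
    obtain ⟨b, hbF, hbmax⟩ := F.exists_max_image (fun v => (P v).length) hFne
    simp only [hF, Finset.mem_filter, Finset.mem_univ, true_and] at hbF
    refine ⟨b, hbF, fun u hu => hbmax u ?_⟩
    simp [hF, hu.1, hu.2]
  choose t ht htmax using hFex
  have hcov : ∀ v, ∃ i, v ∈ (P (t i)).support := by
    intro v
    by_cases hvc : v = c
    · exact ⟨0, by rw [hvc]; exact Walk.start_mem_support _⟩
    obtain ⟨i, hi⟩ := hdir_eq v hvc
    refine ⟨i, ?_⟩
    by_contra hnot
    have hcmem : c ∈ (P (t i)).support := Walk.start_mem_support _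
    obtain ⟨x, q, hx, hqsub, hqfirst, hqpath'⟩ :=
      exists_prefix_until {u | u ∈ (P (t i)).support} (P v).reverse hcmem
    have hqpath := hqpath' ((hP v).reverse)
    have hrpath : q.reverse.IsPath := hqpath.reverse
    have hrsub' : ∀ u ∈ q.reverse.support, u ∈ (P v).support := by
      intro u hu
      rw [Walk.support_reverse, List.mem_reverse] at hu
      have := hqsub u hu
      rwa [Walk.support_reverse, List.mem_reverse] at this
    have hrfirst : ∀ u ∈ q.reverse.support, u ∈ (P (t i)).support → u = x := by
      intro u hu
      rw [Walk.support_reverse, List.mem_reverse] at hu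
      exact hqfirst u hu
    have hxmem : x ∈ (P (t i)).support := hx
    have hxv : x ≠ v := fun h => hnot (h ▸ hxmem)
    have hrlen : 1 ≤ q.reverse.length := one_le_length_of_ne _ hxv
    have hxc : x ≠ c := by
      rintro rfl
      have hrP : q.reverse = P v := hUniq v _ hrpath
      have hnbi : nb i ∈ (P (t i)).support := by
        have hgv : (P (t i)).getVert 1 = nb i := (ht i).2
        rw [← hgv]
        exact getVert_mem_support _ (hPlen _ (ht i).1)
      have hnbr : nb i ∈ q.reverse.support := by
        have hgv : q.reverse.getVert 1 = nb i := by rw [hrP]; exact hi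
        rw [← hgv]
        exact getVert_mem_support _ hrlen
      exact (hnbAdj i).ne' (hrfirst _ hnbr hnbi)
    have htkpath : ((P (t i)).takeUntil x hx).IsPath := (hP _).takeUntil hx
    have hdkpath : ((P (t i)).dropUntil x hx).IsPath := (hP _).dropUntil hx
    have htklen : 1 ≤ ((P (t i)).takeUntil x hx).length := one_le_length_of_ne _ (Ne.symm hxc)
    have hZpath : (((P (t i)).takeUntil x hx).append q.reverse).IsPath :=
      isPath_append htkpath hrpath fun u hu hu' =>
        hrfirst u hu' ((P (t i)).support_takeUntil_subset hx hu)
    have hZ : ((P (t i)).takeUntil x hx).append q.reverse = P v := hUniq v _ hZpath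
    have hZlen : (P v).length = ((P (t i)).takeUntil x hx).length + q.reverse.length := by
      rw [← hZ, Walk.length_append]
    have hlenQ : (P (t i)).length =
        ((P (t i)).takeUntil x hx).length + ((P (t i)).dropUntil x hx).length := by
      conv_lhs => rw [← (P (t i)).take_spec hx]
      rw [Walk.length_append]
    have hvmax : (P v).length ≤ (P (t i)).length := htmax i v ⟨hvc, hi⟩
    by_cases hxt : x = t i
    · have hdknil : ((P (t i)).dropUntil x hx).length = 0 :=
        length_eq_zero_of_isPath_eq _ hdkpath hxt
      omega
    · have hdklen : 1 ≤ ((P (t i)).dropUntil x hx).length := one_le_length_of_ne _ hxt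
      have hu1adj : H.Adj (((P (t i)).takeUntil x hx).getVert
          (((P (t i)).takeUntil x hx).length - 1)) x := by
        have h := ((P (t i)).takeUntil x hx).adj_getVert_succ
          (show ((P (t i)).takeUntil x hx).length - 1 < ((P (t i)).takeUntil x hx).length
            by omega)
        have heq : ((P (t i)).takeUntil x hx).length - 1 + 1 =
            ((P (t i)).takeUntil x hx).length := by omega
        rwa [heq, Walk.getVert_length] at h
      have hu2adj : H.Adj x (((P (t i)).dropUntil x hx).getVert 1) := by
        have h := ((P (t i)).dropUntil x hx).adj_getVert_succ
          (show 0 < ((P (t i)).dropUntil x hx).length by omega)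
        rwa [Walk.getVert_zero] at h
      have hu3adj : H.Adj x (q.reverse.getVert 1) := by
        have h := q.reverse.adj_getVert_succ (show 0 < q.reverse.length by omega)
        rwa [Walk.getVert_zero] at h
      have hu3x : q.reverse.getVert 1 ≠ x := by
        intro h
        have h0 : q.reverse.getVert 1 = q.reverse.getVert 0 := by
          rw [Walk.getVert_zero]; exact h
        have := getVert_injOn_of_isPath hrpath (by omega) (by omega) h0
        omega
      have hu3mem : q.reverse.getVert 1 ∈ q.reverse.support := getVert_mem_support _ (by omega)
      have hu3not : q.reverse.getVert 1 ∉ (P (t i)).support := fun h =>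
        hu3x (hrfirst _ hu3mem h)
      have hu1mem : ((P (t i)).takeUntil x hx).getVert (((P (t i)).takeUntil x hx).length - 1)
          ∈ (P (t i)).support :=
        (P (t i)).support_takeUntil_subset hx (getVert_mem_support _ (by omega))
      have hu2mem : ((P (t i)).dropUntil x hx).getVert 1 ∈ (P (t i)).support :=
        (P (t i)).support_dropUntil_subset hx (getVert_mem_support _ (by omega))
      have hu12 : ((P (t i)).takeUntil x hx).getVert (((P (t i)).takeUntil x hx).length - 1) ≠
          ((P (t i)).dropUntil x hx).getVert 1 := by
        intro h
        have e1 : (P (t i)).getVert (((P (t i)).takeUntil x hx).length - 1) =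
            ((P (t i)).takeUntil x hx).getVert (((P (t i)).takeUntil x hx).length - 1) :=
          getVert_takeUntil_eq _ hx (by omega)
        have e2 : (P (t i)).getVert (((P (t i)).takeUntil x hx).length + 1) =
            ((P (t i)).dropUntil x hx).getVert 1 :=
          getVert_dropUntil_eq _ hx 1
        have := getVert_injOn_of_isPath (hP (t i)) (by omega) (by omega)
          (e1.trans (h.trans e2.symm))
        omega
      have hu13 : ((P (t i)).takeUntil x hx).getVert (((P (t i)).takeUntil x hx).length - 1) ≠
          q.reverse.getVert 1 := fun h => hu3not (h ▸ hu1mem)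
      have hu23 : ((P (t i)).dropUntil x hx).getVert 1 ≠ q.reverse.getVert 1 :=
        fun h => hu3not (h ▸ hu2mem)
      have hsubnb : ({((P (t i)).takeUntil x hx).getVert (((P (t i)).takeUntil x hx).length - 1),
          ((P (t i)).dropUntil x hx).getVert 1, q.reverse.getVert 1} : Finset W) ⊆
          H.neighborFinset x := by
        intro u hu
        simp only [Finset.mem_insert, Finset.mem_singleton] at hu
        rcases hu with rfl | rfl | rfl
        · exact (SimpleGraph.mem_neighborFinset _ _ _).mpr hu1adj.symm
        · exact (SimpleGraph.mem_neighborFinset _ _ _).mpr hu2adj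
        · exact (SimpleGraph.mem_neighborFinset _ _ _).mpr hu3adj
      have hcard : ({((P (t i)).takeUntil x hx).getVert
          (((P (t i)).takeUntil x hx).length - 1),
          ((P (t i)).dropUntil x hx).getVert 1, q.reverse.getVert 1} : Finset W).card = 3 := by
        rw [Finset.card_insert_of_notMem (by simpa [hu12] using hu13),
          Finset.card_insert_of_notMem (by simpa using hu23), Finset.card_singleton]
      have h3 : 3 ≤ H.degree x := by
        rw [← hcard]
        exact Finset.card_le_card hsubnb
      have h2 := hmax x hxc
      omega
  refine ⟨t, fun i => P (t i), fun i => hP _, fun i => (ht i).1, ?_, hcov, ?_⟩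
  · -- pairwise meet only at c
    intro i j hij v hvi hvj
    by_contra hvc
    have d1 : dir v = nb i := by
      rw [hdir_pref (t i) v hvi hvc]; exact (ht i).2
    have d2 : dir v = nb j := by
      rw [hdir_pref (t j) v hvj hvc]; exact (ht j).2
    exact hij (hnbInj i j (d1 ▸ d2 ▸ rfl))
  · -- edges
    intro a b hab
    have hmain : ∃ i, a ∈ (P (t i)).support ∧ b ∈ (P (t i)).support := by
      by_cases hac' : a = c
      · subst hac'
        obtain ⟨i, hbi⟩ := hcov b
        exact ⟨i, Walk.start_mem_support _, hbi⟩
      by_cases hbc : b = c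
      · subst hbc
        obtain ⟨i, hai⟩ := hcov a
        exact ⟨i, hai, Walk.start_mem_support _⟩
      by_cases hbPa : b ∈ (P a).support
      · obtain ⟨i, hai⟩ := hcov a
        refine ⟨i, hai, ?_⟩
        have hpa := hprefix (t i) a hai
        rw [hpa] at hbPa
        exact (P (t i)).support_takeUntil_subset hai hbPa
      · have hZpath : ((P a).append (Walk.cons hab Walk.nil)).IsPath := by
          refine isPath_append (hP a) ?_ ?_
          · simp [Walk.cons_isPath_iff, hab.ne]
          · intro u hu hu'
            simp only [Walk.support_cons, Walk.support_nil, List.mem_cons,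
              List.mem_singleton, List.not_mem_nil, or_false] at hu'
            rcases hu' with rfl | rfl
            · rfl
            · exact absurd hu hbPa
        have hZ : (P a).append (Walk.cons hab Walk.nil) = P b := hUniq b _ hZpath
        have haPb : a ∈ (P b).support := by
          rw [← hZ, Walk.mem_support_append_iff]
          exact Or.inl (Walk.end_mem_support _)
        obtain ⟨i, hbi⟩ := hcov b
        refine ⟨i, ?_, hbi⟩
        have hpb := hprefix (t i) b hbi
        rw [hpb] at haPb
        exact (P (t i)).support_takeUntil_subset hbi haPb
    obtain ⟨i, hai, hbi⟩ := hmain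
    refine ⟨i, ?_⟩
    have hsplit : b ∈ ((P (t i)).takeUntil a hai).support ∨
        b ∈ ((P (t i)).dropUntil a hai).support := by
      have hspec := (P (t i)).take_spec hai
      rw [← hspec, Walk.mem_support_append_iff] at hbi
      exact hbi
    rcases hsplit with hb' | hb'
    · have hsub : (((P (t i)).takeUntil a hai).dropUntil b hb').IsPath :=
        ((hP _).takeUntil hai).dropUntil hb'
      have hcons : (Walk.cons hab.symm Walk.nil : H.Walk b a).IsPath := by
        simp [Walk.cons_isPath_iff, hab.ne']
      have heq := congrArg Subtype.val (hac.path_unique ⟨_, hsub⟩ ⟨_, hcons⟩)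
      simp only at heq
      have hmem : s(b, a) ∈ (((P (t i)).takeUntil a hai).dropUntil b hb').edges := by
        rw [heq]; simp
      have hmem2 : s(b, a) ∈ (P (t i)).edges :=
        (P (t i)).edges_takeUntil_subset hai
          (((P (t i)).takeUntil a hai).edges_dropUntil_subset hb' hmem)
      rwa [Sym2.eq_swap] at hmem2
    · have hsub : (((P (t i)).dropUntil a hai).takeUntil b hb').IsPath :=
        ((hP _).dropUntil hai).takeUntil hb'
      have hcons : (Walk.cons hab Walk.nil : H.Walk a b).IsPath := by
        simp [Walk.cons_isPath_iff, hab.ne]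
      have heq := congrArg Subtype.val (hac.path_unique ⟨_, hsub⟩ ⟨_, hcons⟩)
      simp only at heq
      have hmem : s(a, b) ∈ (((P (t i)).dropUntil a hai).takeUntil b hb').edges := by
        rw [heq]; simp
      exact (P (t i)).edges_dropUntil_subset hai
        (((P (t i)).dropUntil a hai).edges_takeUntil_subset hb' hmem)

end SpiderH

section Assembly
set_option linter.unusedSectionVars false
variable {W : Type*} [DecidableEq W] {H : SimpleGraph W}
variable {V : Type*} {G : SimpleGraph V} [DecidableEq V]

lemma spider_assembly {c : W} (t : Fin 3 → W) (Q : ∀ i, H.Walk c (t i))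
    (hQpath : ∀ i, (Q i).IsPath) (htc : ∀ i, t i ≠ c)
    (hmeet : ∀ i j, i ≠ j → ∀ v, v ∈ (Q i).support → v ∈ (Q j).support → v = c)
    (hcov : ∀ v, ∃ i, v ∈ (Q i).support)
    (hedge : ∀ a b, H.Adj a b → ∃ i, s(a, b) ∈ (Q i).edges)
    (hminor : H.IsMinorOf G) : ContainsCopy H G := by
  obtain ⟨S, hSne, hSdisj, hSconn, hSedge⟩ := hminor
  have hSdisj' : ∀ w w', w ≠ w' → Disjoint (S w) (S w') := fun _ _ h => hSdisj h
  have hk : ∀ i, 1 ≤ (Q i).length := fun i =>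
    one_le_length_of_ne _ (fun h => (htc i) h.symm)
  have hQne : ∀ (i : Fin 3) (m : ℕ), 1 ≤ m → m ≤ (Q i).length → (Q i).getVert m ≠ c := by
    intro i m h1 h2 h
    have h0 : (Q i).getVert m = (Q i).getVert 0 := by rw [h, Walk.getVert_zero]
    have := getVert_injOn_of_isPath (hQpath i) h2 (by omega) h0
    omega
  -- attachment edges from S c to the first branch set of each leg
  have hatt : ∀ i : Fin 3, ∃ a ∈ S c, ∃ y ∈ S ((Q i).getVert 1), G.Adj a y := by
    intro i
    have hadj1 : H.Adj c ((Q i).getVert 1) := by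
      have := (Q i).adj_getVert_succ (show 0 < (Q i).length from hk i)
      rwa [Walk.getVert_zero] at this
    exact hSedge hadj1
  choose aa haa yy hyy hay using hatt
  -- chains through each leg
  have hchain : ∀ i : Fin 3, ∃ (b : V) (p : G.Walk (yy i) b), p.IsPath ∧
      (Q i).length - 1 ≤ p.length ∧
      (∀ v ∈ p.support, ∃ j ≤ (Q i).length - 1, v ∈ S ((Q i).getVert (j + 1))) := by
    intro i
    have hres := chain_path (G := G) (fun j => S ((Q i).getVert (j + 1))) ((Q i).length - 1)
      (fun j j' hj hj' hne => hSdisj' _ _ (fun h => hne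
        (by have := getVert_injOn_of_isPath (hQpath i) (by omega) (by omega) h; omega)))
      (fun j _ => hSconn _)
      (fun j hj => by
        have hadjj : H.Adj ((Q i).getVert (j + 1)) ((Q i).getVert (j + 2)) :=
          (Q i).adj_getVert_succ (by omega)
        exact hSedge hadjj)
      (hyy i)
    obtain ⟨b, p, _, hpath, hlen, hsupp, _⟩ := hres
    exact ⟨b, p, hpath, hlen, hsupp⟩
  choose bb R hRpath hRlen hRsupp using hchain
  -- tripod inside S c
  obtain ⟨x, hxS, A, hApath, hAsub, hAmeet⟩ := tripod (hSconn c) aa haa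
  -- the legs in G
  set L : ∀ i : Fin 3, G.Walk x (bb i) :=
    fun i => (A i).append (Walk.cons (hay i) (R i)) with hLdef
  have hLlen : ∀ i, (Q i).length ≤ (L i).length := by
    intro i
    rw [hLdef]
    simp only [Walk.length_append, Walk.length_cons]
    have := hRlen i
    have := hk i
    omega
  have hRS : ∀ i, ∀ v ∈ (R i).support, ∃ w, w ∈ (Q i).support ∧ w ≠ c ∧ v ∈ S w := by
    intro i v hv
    obtain ⟨j, hj, hvj⟩ := hRsupp i v hv
    have hle : j + 1 ≤ (Q i).length := by have := hk i; omega
    exact ⟨(Q i).getVert (j + 1), getVert_mem_support _ hle,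
      hQne i (j + 1) (by omega) hle, hvj⟩
  have hRnotc : ∀ i, ∀ v ∈ (R i).support, v ∉ S c := by
    intro i v hv hvc
    obtain ⟨w, _, hwc, hvw⟩ := hRS i v hv
    exact Set.disjoint_left.mp (hSdisj' w c hwc) hvw hvc
  have hLpath : ∀ i, (L i).IsPath := by
    intro i
    rw [hLdef]
    refine isPath_append (hApath i) ?_ ?_
    · rw [Walk.cons_isPath_iff]
      exact ⟨hRpath i, fun hmem => hRnotc i _ hmem (haa i)⟩
    · intro v hv hv'
      rw [Walk.support_cons, List.mem_cons] at hv'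
      rcases hv' with rfl | hv'
      · rfl
      · exact absurd (hAsub i v hv) (hRnotc i v hv')
  have hLsupmem : ∀ i v, v ∈ (L i).support →
      v ∈ (A i).support ∨ v = aa i ∨ v ∈ (R i).support := by
    intro i v hv
    rw [hLdef, Walk.mem_support_append_iff] at hv
    rcases hv with hv | hv
    · exact Or.inl hv
    · rw [Walk.support_cons, List.mem_cons] at hv
      rcases hv with rfl | hv
      · exact Or.inr (Or.inl rfl)
      · exact Or.inr (Or.inr hv)
  have hLmeet : ∀ i j, i ≠ j → ∀ v, v ∈ (L i).support → v ∈ (L j).support → v = x := by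
    intro i j hij v hvi hvj
    have hvi' := hLsupmem i v hvi
    have hvj' := hLsupmem j v hvj
    have hAcase : ∀ hA : v ∈ (A i).support, v = aa j ∨ v ∈ (R j).support → v = x := by
      intro hA hcase
      rcases hcase with rfl | hcase
      · exact hAmeet i j hij _ hA ((A j).end_mem_support)
      · exact absurd (hAsub i v hA) (hRnotc j v hcase)
    have hAcase' : ∀ hA : v ∈ (A j).support, v = aa i ∨ v ∈ (R i).support → v = x := by
      intro hA hcase
      rcases hcase with rfl | hcase
      · exact hAmeet j i (Ne.symm hij) _ hA ((A i).end_mem_support)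
      · exact absurd (hAsub j v hA) (hRnotc i v hcase)
    rcases hvi' with hvi' | hvi' <;> rcases hvj' with hvj' | hvj'
    · exact hAmeet i j hij v hvi' hvj'
    · exact hAcase hvi' hvj'
    · exact hAcase' hvj' hvi'
    · rcases hvi' with rfl | hvi'
      · rcases hvj' with h' | hvj'
        · refine hAmeet i j hij _ ((A i).end_mem_support) ?_
          rw [h']
          exact (A j).end_mem_support
        · exact absurd (haa i) (hRnotc j _ hvj')
      · rcases hvj' with rfl | hvj'
        · exact absurd (haa j) (hRnotc i _ hvi')
        · obtain ⟨w1, hw1, hw1c, hvw1⟩ := hRS i v hvi'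
          obtain ⟨w2, hw2, hw2c, hvw2⟩ := hRS j v hvj'
          by_cases hww : w1 = w2
          · subst hww
            exact absurd (hmeet i j hij w1 hw1 hw2) hw1c
          · exact absurd hvw2 (Set.disjoint_left.mp (hSdisj' w1 w2 hww) hvw1)
  -- positions of vertices of H on the legs
  have hpos : ∀ w : W, w ≠ c → ∃ (i : Fin 3) (m : ℕ), 1 ≤ m ∧ m ≤ (Q i).length ∧
      (Q i).getVert m = w := by
    intro w hw
    obtain ⟨i, hi⟩ := hcov w
    rw [Walk.mem_support_iff_exists_getVert] at hi
    obtain ⟨m, hm, hmle⟩ := hi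
    refine ⟨i, m, ?_, hmle, hm⟩
    rcases Nat.eq_zero_or_pos m with rfl | h
    · rw [Walk.getVert_zero] at hm
      exact absurd hm.symm hw
    · omega
  choose iw mw h1w hlew hvw using hpos
  set f : W → V := fun w => if h : w = c then x else (L (iw w h)).getVert (mw w h) with hfdef
  have hfc : f c = x := by rw [hfdef]; simp
  have hleg : ∀ (w : W) (h : w ≠ c) (i' : Fin 3), w ∈ (Q i').support → i' = iw w h := by
    intro w h i' hi'
    by_contra hne
    refine h (hmeet i' (iw w h) hne w hi' ?_)
    have hh := getVert_mem_support (Q (iw w h)) (hlew w h)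
    rwa [hvw w h] at hh
  have hfval : ∀ (w : W) (i : Fin 3) (m : ℕ), m ≤ (Q i).length → (Q i).getVert m = w →
      f w = (L i).getVert m := by
    intro w i m hm hvm
    by_cases hw : w = c
    · subst hw
      have hm0 : m = 0 := by
        have h0 : (Q i).getVert m = (Q i).getVert 0 := by rw [hvm, Walk.getVert_zero]
        have := getVert_injOn_of_isPath (hQpath i) hm (by omega) h0
        omega
      subst hm0
      rw [hfc, Walk.getVert_zero]
    · have hieq : i = iw w hw := hleg w hw i (by rw [← hvm]; exact getVert_mem_support _ hm)
      subst hieq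
      have hmeq : mw w hw = m := by
        refine getVert_injOn_of_isPath (hQpath (iw w hw)) (hlew w hw) hm ?_
        rw [hvw w hw, hvm]
      rw [hfdef]
      simp only [dif_neg hw, hmeq]
  refine ⟨f, ?_, ?_⟩
  · -- injectivity
    have haux : ∀ (w : W) (h : w ≠ c), f w ≠ x := by
      intro w h hfx
      have h1 : f w = (L (iw w h)).getVert (mw w h) := by rw [hfdef]; simp only [dif_neg h]
      have h2 : (L (iw w h)).getVert (mw w h) = (L (iw w h)).getVert 0 := by
        rw [← h1, hfx, Walk.getVert_zero]
      have hle : mw w h ≤ (L (iw w h)).length := le_trans (hlew w h) (hLlen _)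
      have := getVert_injOn_of_isPath (hLpath _) hle (by omega) h2
      have := h1w w h
      omega
    intro w1 w2 h12
    by_cases h1 : w1 = c <;> by_cases h2 : w2 = c
    · rw [h1, h2]
    · subst h1
      rw [hfc] at h12
      exact absurd h12.symm (haux w2 h2)
    · subst h2
      rw [hfc] at h12
      exact absurd h12 (haux w1 h1)
    · have e1 : f w1 = (L (iw w1 h1)).getVert (mw w1 h1) := by
        rw [hfdef]; simp only [dif_neg h1]
      have e2 : f w2 = (L (iw w2 h2)).getVert (mw w2 h2) := by
        rw [hfdef]; simp only [dif_neg h2]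
      by_cases hii : iw w1 h1 = iw w2 h2
      · have hle1 : mw w1 h1 ≤ (L (iw w1 h1)).length := le_trans (hlew w1 h1) (hLlen _)
        have hle2 : mw w2 h2 ≤ (L (iw w1 h1)).length := by
          rw [hii]; exact le_trans (hlew w2 h2) (hLlen _)
        have hgv : (L (iw w1 h1)).getVert (mw w1 h1) = (L (iw w1 h1)).getVert (mw w2 h2) := by
          rw [← e1, h12, e2, ← hii]
        have hmm := getVert_injOn_of_isPath (hLpath _) hle1 hle2 hgv
        calc w1 = (Q (iw w1 h1)).getVert (mw w1 h1) := (hvw w1 h1).symm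
          _ = (Q (iw w2 h2)).getVert (mw w2 h2) := by rw [hii, hmm]
          _ = w2 := hvw w2 h2
      · have hmem1 : f w1 ∈ (L (iw w1 h1)).support := by
          rw [e1]; exact getVert_mem_support _ (le_trans (hlew w1 h1) (hLlen _))
        have hmem2 : f w1 ∈ (L (iw w2 h2)).support := by
          rw [h12, e2]; exact getVert_mem_support _ (le_trans (hlew w2 h2) (hLlen _))
        exact absurd (hLmeet _ _ hii _ hmem1 hmem2) (haux w1 h1)
  · -- adjacency
    intro a b hab
    obtain ⟨i, hiedge⟩ := hedge a b hab
    obtain ⟨m, hm, hor⟩ := exists_getVert_of_mem_edges hiedge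
    have hadjL : G.Adj ((L i).getVert m) ((L i).getVert (m + 1)) :=
      (L i).adj_getVert_succ (by have := hLlen i; omega)
    rcases hor with ⟨ha, hb⟩ | ⟨hb, ha⟩
    · rw [hfval a i m (by omega) ha, hfval b i (m + 1) (by omega) hb]
      exact hadjL
    · rw [hfval a i (m + 1) (by omega) ha, hfval b i m (by omega) hb]
      exact hadjL.symm

end Assembly

/-- `H` is a path graph (isomorphic to some `pathGraph n`). -/
def IsPathGraph {W : Type*} (H : SimpleGraph W) : Prop :=
  ∃ n : ℕ, Nonempty (H ≃g SimpleGraph.pathGraph n)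

/-- `H` is a three-legged spider: a tree with exactly one vertex of degree `3`,
all other vertices having degree at most `2` (three internally disjoint paths
meeting at a common endpoint). -/
def IsThreeLeggedSpider {W : Type*} [Fintype W] (H : SimpleGraph W) [DecidableRel H.Adj] :
    Prop :=
  H.IsAcyclic ∧ H.Connected ∧ ∃ c : W, H.degree c = 3 ∧ ∀ v : W, v ≠ c → H.degree v ≤ 2

/-- If `H` is a path or a three-legged spider, then every graph containing `H` as a minor
contains `H` as a subgraph. -/
theorem stmt4 {W V : Type*} [Fintype W] [DecidableEq W] (H : SimpleGraph W) [DecidableRel H.Adj]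
    (G : SimpleGraph V)
    (hH : IsPathGraph H ∨ IsThreeLeggedSpider H)
    (hminor : H.IsMinorOf G) : ContainsCopy H G := by
  classical
  rcases hH with ⟨n, ⟨e⟩⟩ | ⟨hac, hconn, c, hdeg, hmax⟩
  · exact containsCopy_of_pathGraph e hminor
  · obtain ⟨t, Q, h1, h2, h3, h4, h5⟩ := spider_decomp hac hconn hdeg hmax
    exact spider_assembly t Q h1 h2 h3 h4 h5 hminor
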